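/- The orthogonal decomposition of a full-rank lattice L into indecomposable pairwise orthogonal sublattices is unique up to the order of the summands: if L = L₁ ⊥ ... ⊥ L_r = M₁ ⊥ ... ⊥ M_s with all L_i and M_j indecomposable and nonzero, then r = s and the multisets {L_i} and {M_j} coincide. -/

import Mathlib

open Submodule
open scoped RealInnerProductSpace

noncomputable section

/-- A full-rank lattice in `d`-dimensional Euclidean space: the `ℤ`-span of an `ℝ`-basis. -/
def IsFullLattice (d : ℕ) (L : Submodule ℤ (EuclideanSpace ℝ (Fin d))) : Prop :=
  ∃ b : Module.Basis (Fin d) ℝ (EuclideanSpace ℝ (Fin d)), L = Submodule.span ℤ (Set.range b)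

/-- A lattice `M` is decomposable if it is the orthogonal direct sum of two nonzero
sublattices. -/
def Decomposable {E : Type*} [NormedAddCommGroup E] [InnerProductSpace ℝ E]
    (M : Submodule ℤ E) : Prop :=
  ∃ M₁ M₂ : Submodule ℤ E, M₁ ≠ ⊥ ∧ M₂ ≠ ⊥ ∧ M₁ ⊔ M₂ = M ∧
    ∀ x ∈ M₁, ∀ y ∈ M₂, ⟪x, y⟫ = 0

section Aux

variable {E : Type*} [NormedAddCommGroup E] [InnerProductSpace ℝ E]

/-- A (length-)indecomposable vector of a lattice: a nonzero lattice vector which is not the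
sum of two nonzero orthogonal lattice vectors. -/
def IndecVec (L : Submodule ℤ E) (x : E) : Prop :=
  x ∈ L ∧ x ≠ 0 ∧ ∀ y z : E, y ∈ L → z ∈ L → y ≠ 0 → z ≠ 0 → ⟪y, z⟫ = 0 → x ≠ y + z

lemma inner_span_right_zero {T : Set E} {a : E} (h : ∀ b ∈ T, ⟪a, b⟫ = 0) :
    ∀ y ∈ span ℤ T, ⟪a, y⟫ = 0 := by
  intro y hy
  induction hy using Submodule.span_induction with
  | mem b hb => exact h b hb
  | zero => exact inner_zero_right a
  | add u v _ _ hu hv => rw [inner_add_right, hu, hv, add_zero]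
  | smul n u _ hu =>
      rw [← Int.cast_smul_eq_zsmul ℝ, inner_smul_right, hu, mul_zero]

/-- Orthogonality of two sets extends to their `ℤ`-spans. -/
lemma inner_span_span_zero {S T : Set E} (h : ∀ a ∈ S, ∀ b ∈ T, ⟪a, b⟫ = 0) :
    ∀ x ∈ span ℤ S, ∀ y ∈ span ℤ T, ⟪x, y⟫ = 0 := by
  intro x hx
  induction hx using Submodule.span_induction with
  | mem a ha => exact inner_span_right_zero (h a ha)
  | zero => intro y hy; exact inner_zero_left y
  | add u v _ _ hu hv =>
      intro y hy; rw [inner_add_left, hu y hy, hv y hy, add_zero]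
  | smul n u _ hu =>
      intro y hy
      rw [← Int.cast_smul_eq_zsmul ℝ, inner_smul_left, hu y hy, mul_zero]

/-- Every lattice vector is a `ℤ`-combination of indecomposable vectors, provided nonzero
lattice vectors have norm bounded below. -/
lemma le_span_indec {L : Submodule ℤ E} {ε : ℝ} (hε : 0 < ε)
    (hmin : ∀ v ∈ L, v ≠ 0 → ε ≤ ‖v‖) :
    L ≤ span ℤ {x | IndecVec L x} := by
  have key : ∀ n : ℕ, ∀ x ∈ L, ‖x‖ ^ 2 ≤ n * ε ^ 2 → x ∈ span ℤ {x | IndecVec L x} := by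
    intro n
    induction n with
    | zero =>
        intro x hx hn
        have : x = 0 := by
          have h0 : ‖x‖ ^ 2 ≤ 0 := by simpa using hn
          have h1 := sq_nonneg ‖x‖
          have : ‖x‖ ^ 2 = 0 := le_antisymm h0 h1
          simpa [pow_eq_zero_iff] using this
        simp [this]
    | succ n ih =>
        intro x hx hn
        by_cases hx0 : x = 0
        · simp [hx0]
        by_cases hind : IndecVec L x
        · exact subset_span hind
        · have : ∃ y z : E, y ∈ L ∧ z ∈ L ∧ y ≠ 0 ∧ z ≠ 0 ∧ ⟪y, z⟫ = 0 ∧ x = y + z := by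
            by_contra hcon
            push_neg at hcon
            exact hind ⟨hx, hx0, fun y z hy hz hy0 hz0 hyz =>
              hcon y z hy hz hy0 hz0 hyz⟩
          obtain ⟨y, z, hy, hz, hy0, hz0, hyz, rfl⟩ := this
          have hnorm : ‖y + z‖ ^ 2 = ‖y‖ ^ 2 + ‖z‖ ^ 2 := by
            rw [norm_add_sq_real, hyz]; ring
          have hyε : ε ^ 2 ≤ ‖y‖ ^ 2 :=
            pow_le_pow_left₀ hε.le (hmin y hy hy0) 2
          have hzε : ε ^ 2 ≤ ‖z‖ ^ 2 :=
            pow_le_pow_left₀ hε.le (hmin z hz hz0) 2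
          have hy' : ‖y‖ ^ 2 ≤ n * ε ^ 2 := by
            have := hn
            rw [hnorm] at this
            push_cast at this ⊢
            nlinarith
          have hz' : ‖z‖ ^ 2 ≤ n * ε ^ 2 := by
            have := hn
            rw [hnorm] at this
            push_cast at this ⊢
            nlinarith
          exact add_mem (ih y hy hy') (ih z hz hz')
  intro x hx
  refine key ⌈‖x‖ ^ 2 / ε ^ 2⌉₊ x hx ?_
  have hε2 : 0 < ε ^ 2 := by positivity
  rw [← div_le_iff₀ hε2]
  exact Nat.le_ceil _

/-- An indecomposable vector lies in one of the orthogonal summands. -/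
lemma indec_mem_summand {r : ℕ} {L : Submodule ℤ E} {Li : Fin r → Submodule ℤ E}
    (hLle : ∀ i, Li i ≤ L) (hLsum : ⨆ i, Li i = L)
    (hLorth : ∀ i j, i ≠ j → ∀ x ∈ Li i, ∀ y ∈ Li j, ⟪x, y⟫ = 0)
    {x : E} (hx : IndecVec L x) : ∃ i, x ∈ Li i := by
  obtain ⟨hxL, hx0, hxind⟩ := hx
  rw [← hLsum] at hxL
  obtain ⟨f, hf, hfs⟩ := (mem_iSup_iff_exists_finsupp _ _).mp hxL
  have hne : ∃ a, f a ≠ 0 := by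
    by_contra hcon
    push_neg at hcon
    apply hx0
    rw [← hfs, Finsupp.sum]
    exact Finset.sum_eq_zero fun i _ => hcon i
  obtain ⟨a, ha⟩ := hne
  refine ⟨a, ?_⟩
  have hinner : ⟪f a, x⟫ = ⟪f a, f a⟫ := by
    rw [← hfs, Finsupp.sum, inner_sum]
    rw [Finset.sum_eq_single a (fun j _ hj => hLorth a j (Ne.symm hj) _ (hf a) _ (hf j))
      (fun hnot => absurd (Finsupp.mem_support_iff.mpr ha) hnot)]
  by_cases hxa : x = f a
  · rw [hxa]; exact hf a
  · exfalso
    have hzmem : x - f a ∈ L := sub_mem (by rw [← hLsum]; exact hxL) (hLle a (hf a))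
    have hz0 : x - f a ≠ 0 := sub_ne_zero_of_ne hxa
    have horth : ⟪f a, x - f a⟫ = 0 := by
      rw [inner_sub_right, hinner, sub_self]
    exact hxind (f a) (x - f a) (hLle a (hf a)) hzmem ha hz0 horth (by abel)

/-- Each summand is spanned by the indecomposable vectors it contains. -/
lemma summand_le_span_indec {r : ℕ} {L : Submodule ℤ E} {Li : Fin r → Submodule ℤ E}
    (hLle : ∀ i, Li i ≤ L) (hLsum : ⨆ i, Li i = L)
    (hLorth : ∀ i j, i ≠ j → ∀ x ∈ Li i, ∀ y ∈ Li j, ⟪x, y⟫ = 0)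
    (hspan : L ≤ span ℤ {x | IndecVec L x}) (i : Fin r) :
    Li i ≤ span ℤ ({x | IndecVec L x} ∩ (Li i : Set E)) := by
  intro x hx
  have hx' : x ∈ ⨆ j, span ℤ ({x | IndecVec L x} ∩ (Li j : Set E)) := by
    have h1 : x ∈ span ℤ {x | IndecVec L x} := hspan (hLle i hx)
    have h2 : {x | IndecVec L x} ⊆ ⋃ j, ({x | IndecVec L x} ∩ (Li j : Set E)) := by
      intro v hv
      obtain ⟨j, hj⟩ := indec_mem_summand hLle hLsum hLorth hv
      exact Set.mem_iUnion.mpr ⟨j, hv, hj⟩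
    have h3 : span ℤ {x | IndecVec L x} ≤
        ⨆ j, span ℤ ({x | IndecVec L x} ∩ (Li j : Set E)) := by
      rw [← span_iUnion]; exact span_mono h2
    exact h3 h1
  obtain ⟨g, hg, hgs⟩ := (mem_iSup_iff_exists_finsupp _ _).mp hx'
  have hgle : ∀ j, g j ∈ Li j := fun j =>
    span_le.mpr (Set.inter_subset_right) (hg j)
  set u := x - g i with hu
  have hxi : u ∈ Li i := sub_mem hx (hgle i)
  have hinner : ⟪u, x⟫ = ⟪u, g i⟫ := by
    rw [← hgs, Finsupp.sum, inner_sum]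
    by_cases hi : i ∈ g.support
    · rw [Finset.sum_eq_single i
        (fun j _ hj => hLorth i j (Ne.symm hj) _ hxi _ (hgle j)) (fun h => absurd hi h)]
    · rw [Finsupp.notMem_support_iff.mp hi, inner_zero_right]
      exact Finset.sum_eq_zero fun j hj => by
        have : j ≠ i := fun h => hi (h ▸ hj)
        exact hLorth i j (Ne.symm this) _ hxi _ (hgle j)
  have hz : u = 0 := by
    have : ⟪u, u⟫ = 0 := by rw [hu, inner_sub_right, hinner, sub_self]
    exact inner_self_eq_zero.mp this
  have : x = g i := by
    have := sub_eq_zero.mp hz; exact this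
  rw [this]; exact hg i

/-- Each indecomposable summand of one decomposition is contained in a summand of the other. -/
lemma exists_summand_le {r s : ℕ} {L : Submodule ℤ E}
    {Li : Fin r → Submodule ℤ E} {Mi : Fin s → Submodule ℤ E}
    (hLle : ∀ i, Li i ≤ L) (hLsum : ⨆ i, Li i = L)
    (hLorth : ∀ i j, i ≠ j → ∀ x ∈ Li i, ∀ y ∈ Li j, ⟪x, y⟫ = 0)
    (hMle : ∀ j, Mi j ≤ L) (hMsum : ⨆ j, Mi j = L)
    (hMorth : ∀ i j, i ≠ j → ∀ x ∈ Mi i, ∀ y ∈ Mi j, ⟪x, y⟫ = 0)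
    (hspan : L ≤ span ℤ {x | IndecVec L x})
    (i : Fin r) (hne : Li i ≠ ⊥) (hind : ¬Decomposable (Li i)) :
    ∃ j, Li i ≤ Mi j := by
  set C : Set E := {x | IndecVec L x} ∩ (Li i : Set E) with hCdef
  have hC : Li i ≤ span ℤ C := summand_le_span_indec hLle hLsum hLorth hspan i
  have hCsub : C ⊆ (Li i : Set E) := Set.inter_subset_right
  have hCspan : span ℤ C = Li i :=
    le_antisymm (span_le.mpr hCsub) hC
  have hCne : C.Nonempty := by
    rcases Set.eq_empty_or_nonempty C with h | h
    · exact absurd (by rw [← hCspan, h, span_empty]) hne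
    · exact h
  obtain ⟨v, hv⟩ := hCne
  obtain ⟨j₀, hj₀⟩ := indec_mem_summand hMle hMsum hMorth hv.1
  have hsub : C ⊆ (Mi j₀ : Set E) := by
    by_contra hcon
    obtain ⟨w, hwC, hwM⟩ := Set.not_subset.mp hcon
    apply hind
    refine ⟨span ℤ (C ∩ (Mi j₀ : Set E)), span ℤ (C \ (Mi j₀ : Set E)), ?_, ?_, ?_, ?_⟩
    · intro hbot
      have : v ∈ (⊥ : Submodule ℤ E) := hbot ▸ subset_span ⟨hv, hj₀⟩
      exact hv.1.2.1 (by simpa using this)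
    · intro hbot
      have : w ∈ (⊥ : Submodule ℤ E) := hbot ▸ subset_span ⟨hwC, hwM⟩
      exact hwC.1.2.1 (by simpa using this)
    · rw [← span_union, Set.inter_union_diff, hCspan]
    · apply inner_span_span_zero
      rintro a ⟨_, haM⟩ b ⟨hbC, hbM⟩
      obtain ⟨j', hj'⟩ := indec_mem_summand hMle hMsum hMorth hbC.1
      exact hMorth j₀ j' (fun h => hbM (h ▸ hj')) a haM b hj'
  exact ⟨j₀, hC.trans (span_le.mpr hsub)⟩

/-- Nonzero lattice vectors in a full lattice have norm bounded below. -/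
lemma exists_eps {d : ℕ} {L : Submodule ℤ (EuclideanSpace ℝ (Fin d))}
    (hL : IsFullLattice d L) : ∃ ε > 0, ∀ v ∈ L, v ≠ 0 → ε ≤ ‖v‖ := by
  obtain ⟨b, rfl⟩ := hL
  have hopen : IsOpen ({0} : Set (span ℤ (Set.range b))) := isOpen_discrete _
  obtain ⟨ε, hε, hball⟩ := Metric.isOpen_iff.mp hopen 0 rfl
  refine ⟨ε, hε, fun v hv hv0 => ?_⟩
  by_contra hlt
  push_neg at hlt
  have : (⟨v, hv⟩ : span ℤ (Set.range b)) ∈ Metric.ball 0 ε := by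
    simpa [Metric.mem_ball, Subtype.dist_eq, dist_zero_right] using hlt
  exact hv0 (congrArg Subtype.val (hball this))

end Aux

/-- Eichler's uniqueness theorem: the orthogonal decomposition of a full-rank lattice into
indecomposable pairwise orthogonal nonzero sublattices is unique up to the order of the
summands. -/
theorem orthogonal_decomposition_unique
    (d : ℕ) (L : Submodule ℤ (EuclideanSpace ℝ (Fin d))) (hL : IsFullLattice d L)
    (r s : ℕ)
    (Li : Fin r → Submodule ℤ (EuclideanSpace ℝ (Fin d)))
    (Mi : Fin s → Submodule ℤ (EuclideanSpace ℝ (Fin d)))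
    (hLle : ∀ i, Li i ≤ L) (hMle : ∀ j, Mi j ≤ L)
    (hLsum : ⨆ i, Li i = L) (hMsum : ⨆ j, Mi j = L)
    (hLorth : ∀ i j, i ≠ j → ∀ x ∈ Li i, ∀ y ∈ Li j, ⟪x, y⟫ = 0)
    (hMorth : ∀ i j, i ≠ j → ∀ x ∈ Mi i, ∀ y ∈ Mi j, ⟪x, y⟫ = 0)
    (hLne : ∀ i, Li i ≠ ⊥) (hMne : ∀ j, Mi j ≠ ⊥)
    (hLind : ∀ i, ¬Decomposable (Li i)) (hMind : ∀ j, ¬Decomposable (Mi j)) :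
    r = s ∧ ∃ e : Fin r ≃ Fin s, ∀ i, Li i = Mi (e i) := by
  obtain ⟨ε, hε, hmin⟩ := exists_eps hL
  have hspan : L ≤ span ℤ {x | IndecVec L x} := le_span_indec hε hmin
  choose σ hσ using fun i =>
    exists_summand_le hLle hLsum hLorth hMle hMsum hMorth hspan i (hLne i) (hLind i)
  choose τ hτ using fun j =>
    exists_summand_le hMle hMsum hMorth hLle hLsum hLorth hspan j (hMne j) (hMind j)
  have keyL : ∀ i i', Li i ≤ Li i' → i = i' := by
    intro i i' h
    by_contra hne'
    apply hLne i
    rw [eq_bot_iff]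
    intro x hx
    have h0 := hLorth i i' hne' x hx x (h hx)
    rw [mem_bot]
    exact inner_self_eq_zero.mp h0
  have keyM : ∀ j j', Mi j ≤ Mi j' → j = j' := by
    intro j j' h
    by_contra hne'
    apply hMne j
    rw [eq_bot_iff]
    intro x hx
    have h0 := hMorth j j' hne' x hx x (h hx)
    rw [mem_bot]
    exact inner_self_eq_zero.mp h0
  have hτσ : ∀ i, τ (σ i) = i := fun i =>
    (keyL i (τ (σ i)) ((hσ i).trans (hτ (σ i)))).symm
  have hστ : ∀ j, σ (τ j) = j := fun j =>
    (keyM j (σ (τ j)) ((hτ j).trans (hσ (τ j)))).symm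
  refine ⟨by simpa using Fintype.card_congr (⟨σ, τ, hτσ, hστ⟩ : Fin r ≃ Fin s),
    ⟨σ, τ, hτσ, hστ⟩, fun i => ?_⟩
  show Li i = Mi (σ i)
  refine le_antisymm (hσ i) ?_
  have h1 := hτ (σ i)
  rwa [hτσ i] at h1
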